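/- arXiv:2512.08631 — 2 statements merged into one kernel-verified Lean document; each statement's English description precedes it below -/
import Mathlib

section
/- The functions τ ↦ e^{2πiτ} and τ ↦ j(τ) on the upper half-plane ℍ are algebraically independent over ℚ; equivalently, the meromorphic function J on the punctured unit disk is transcendental over the rational function field ℚ(z). -/
/-!
The functions `τ ↦ e^{2πiτ}` and `τ ↦ j(τ)` on the upper half-plane are
algebraically independent over `ℚ`; equivalently, the modular invariant `J` in
the nome is transcendental over `ℚ(z)`.
-/

/-- The modular discriminant in the nome: `Δ(q) = q ∏_{n ≥ 1} (1 - qⁿ)²⁴`. -/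
noncomputable def Δ (q : ℂ) : ℂ := q * ∏' n : ℕ, (1 - q ^ (n + 1)) ^ 24

/-- The normalized Eisenstein series of weight 4 in the nome. -/
noncomputable def E₄ (q : ℂ) : ℂ :=
  1 + 240 * ∑' n : ℕ, (ArithmeticFunction.sigma 3 (n + 1) : ℂ) * q ^ (n + 1)

/-- The modular `j`-invariant in the nome: `J(q) = E₄(q)³ / Δ(q)`. -/
noncomputable def J (q : ℂ) : ℂ := E₄ q ^ 3 / Δ q

/-- The classical modular `j`-invariant on the upper half-plane, `j(τ) = J(e^{2πiτ})`. -/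
noncomputable def jInv (τ : UpperHalfPlane) : ℂ :=
  J (Complex.exp (2 * Real.pi * Complex.I * (τ : ℂ)))


noncomputable section
namespace QJAux
open Finset Polynomial Complex


/-- sum of logs -/
def Lsum (r : ℝ) : ℝ := ∑' n : ℕ, Real.log (1 - r ^ (n + 1))

variable {r : ℝ}

lemma factor_pos (h0 : 0 ≤ r) (h1 : r < 1) (n : ℕ) : 0 < 1 - r ^ (n + 1) := by
  have : r ^ (n+1) < 1 := pow_lt_one₀ h0 h1 (Nat.succ_ne_zero n)
  linarith

lemma summable_neg_log (h0 : 0 ≤ r) (h1 : r < 1) :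
    Summable fun n : ℕ => -Real.log (1 - r ^ (n + 1)) := by
  have hgeo : Summable fun n : ℕ => r ^ (n + 1) * (1 - r)⁻¹ := by
    have h := (summable_geometric_of_lt_one h0 h1).mul_left r
    have h2 := h.mul_right (1 - r)⁻¹
    simpa [pow_succ, mul_comm, mul_assoc, mul_left_comm] using h2
  refine Summable.of_nonneg_of_le (fun n => ?_) (fun n => ?_) hgeo
  · have h := factor_pos h0 h1 n
    have : Real.log (1 - r ^ (n+1)) ≤ 0 := by
      apply Real.log_nonpos (by linarith)
      have : 0 ≤ r ^ (n+1) := by positivity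
      linarith
    linarith
  · have hx := factor_pos h0 h1 n
    have h2 : Real.log ((1 - r ^ (n+1))⁻¹) ≤ (1 - r ^ (n+1))⁻¹ - 1 :=
      Real.log_le_sub_one_of_pos (by positivity)
    rw [Real.log_inv] at h2
    have hr1 : r ^ (n+1) ≤ r := by
      calc r ^ (n+1) ≤ r ^ 1 := pow_le_pow_of_le_one h0 h1.le (by omega)
      _ = r := pow_one r
    have h4 : (1 - r) ≤ (1 - r ^ (n+1)) := by linarith
    have h5 : (1 - r ^ (n+1))⁻¹ - 1 = r ^ (n+1) * (1 - r ^ (n+1))⁻¹ := by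
      field_simp
      ring
    have h6 : r ^ (n+1) * (1 - r ^ (n+1))⁻¹ ≤ r ^ (n+1) * (1 - r)⁻¹ := by
      apply mul_le_mul_of_nonneg_left _ (by positivity)
      exact inv_anti₀ (by linarith) h4
    linarith

lemma summable_log (h0 : 0 ≤ r) (h1 : r < 1) :
    Summable fun n : ℕ => Real.log (1 - r ^ (n + 1)) := by
  simpa using (summable_neg_log h0 h1).neg

lemma Lsum_nonpos (h0 : 0 ≤ r) (h1 : r < 1) : Lsum r ≤ 0 := by
  apply tsum_nonpos
  intro n
  have h := factor_pos h0 h1 n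
  apply Real.log_nonpos (by linarith)
  have : 0 ≤ r ^ (n+1) := by positivity
  linarith

/-- partial-sum bound : Lsum r ≤ N log(1-r^N) -/
lemma Lsum_le (h0 : 0 ≤ r) (h1 : r < 1) (N : ℕ) :
    Lsum r ≤ (N : ℝ) * Real.log (1 - r ^ N) := by
  have hs := summable_log h0 h1
  have h1' : Lsum r ≤ ∑ n ∈ range N, Real.log (1 - r ^ (n + 1)) := by
    have := Summable.sum_le_tsum (range N)
      (fun n _ => by
        have h := factor_pos h0 h1 n
        have hp : 0 ≤ r ^ (n+1) := by positivity
        have : Real.log (1 - r ^ (n+1)) ≤ 0 := Real.log_nonpos (by linarith) (by linarith)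
        linarith : ∀ n ∉ range N, 0 ≤ -Real.log (1 - r ^ (n + 1)))
      (summable_neg_log h0 h1)
    rw [tsum_neg] at this
    simp only [Finset.sum_neg_distrib] at this
    unfold Lsum
    linarith
  refine h1'.trans ?_
  have h2 : ∀ n ∈ range N, Real.log (1 - r ^ (n + 1)) ≤ Real.log (1 - r ^ N) := by
    intro n hn
    rw [mem_range] at hn
    apply Real.log_le_log (factor_pos h0 h1 n)
    have : r ^ N ≤ r ^ (n + 1) := pow_le_pow_of_le_one h0 h1.le (by omega)
    linarith
  calc ∑ n ∈ range N, Real.log (1 - r ^ (n + 1)) ≤ ∑ n ∈ range N, Real.log (1 - r ^ N) :=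
        Finset.sum_le_sum h2
    _ = (N : ℝ) * Real.log (1 - r ^ N) := by
        rw [Finset.sum_const, card_range, nsmul_eq_mul]

lemma hasProd_pow24 (h0 : 0 ≤ r) (h1 : r < 1) :
    HasProd (fun n : ℕ => (1 - r ^ (n + 1)) ^ 24) (Real.exp (24 * Lsum r)) := by
  have hsum : HasSum (fun n : ℕ => 24 * Real.log (1 - r ^ (n + 1))) (24 * Lsum r) :=
    (summable_log h0 h1).hasSum.mul_left 24
  have := hsum.rexp
  convert this using 2 with n
  rw [Function.comp_apply,
    show (24:ℝ) * Real.log (1 - r ^ (n+1)) = ((24:ℕ):ℝ) * Real.log (1 - r ^ (n+1)) by norm_num,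
    Real.exp_nat_mul, Real.exp_log (factor_pos h0 h1 n)]




/- placeholders copying original defs -/
/-- the real Eisenstein sum -/
def S4 (r : ℝ) : ℝ := ∑' n : ℕ, (ArithmeticFunction.sigma 3 (n + 1) : ℝ) * r ^ (n + 1)

variable {r : ℝ}

lemma sigma3_le (n : ℕ) : (ArithmeticFunction.sigma 3 n : ℝ) ≤ (n : ℝ) ^ 4 := by
  rw [ArithmeticFunction.sigma_apply]
  push_cast
  have hsub : n.divisors ⊆ Finset.Icc 1 n := by
    intro d hd
    rw [Nat.mem_divisors] at hd
    rw [Finset.mem_Icc]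
    refine ⟨?_, Nat.le_of_dvd (Nat.pos_of_ne_zero hd.2) hd.1⟩
    rcases Nat.eq_zero_or_pos d with h | h
    · exact absurd (Nat.eq_zero_of_zero_dvd (h ▸ hd.1)) hd.2
    · exact h
  have hcard : n.divisors.card ≤ n := by
    calc n.divisors.card ≤ (Finset.Icc 1 n).card := Finset.card_le_card hsub
      _ = n := by rw [Nat.card_Icc]; omega
  calc (∑ d ∈ n.divisors, (d : ℝ) ^ 3) ≤ ∑ _d ∈ n.divisors, (n : ℝ) ^ 3 := by
        apply Finset.sum_le_sum
        intro d hd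
        have hdn : d ≤ n := Nat.divisor_le hd
        exact pow_le_pow_left₀ (Nat.cast_nonneg d) (by exact_mod_cast hdn) 3
    _ = (n.divisors.card : ℝ) * (n : ℝ) ^ 3 := by rw [Finset.sum_const, nsmul_eq_mul]
    _ ≤ (n : ℝ) * (n : ℝ) ^ 3 := by
        have : (n.divisors.card : ℝ) ≤ (n : ℝ) := by exact_mod_cast hcard
        have h3 : (0:ℝ) ≤ (n : ℝ) ^ 3 := by positivity
        exact mul_le_mul_of_nonneg_right this h3
    _ = (n : ℝ) ^ 4 := by ring

lemma summable_S4 (h0 : 0 ≤ r) (h1 : r < 1) :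
    Summable fun n : ℕ => (ArithmeticFunction.sigma 3 (n + 1) : ℝ) * r ^ (n + 1) := by
  have habs : |r| < 1 := abs_lt.2 ⟨by linarith, h1⟩
  have hb : Summable fun n : ℕ => ((n : ℝ) ^ 4) * r ^ n := by
    simpa using summable_pow_mul_geometric_of_norm_lt_one (R := ℝ) 4 (r := r)
      (by rwa [Real.norm_eq_abs])
  have hb' : Summable fun n : ℕ => ((n + 1 : ℕ) : ℝ) ^ 4 * r ^ (n + 1) :=
    (summable_nat_add_iff 1).2 hb
  refine Summable.of_nonneg_of_le (fun n => ?_) (fun n => ?_) hb'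
  · positivity
  · apply mul_le_mul_of_nonneg_right (sigma3_le (n + 1)) (by positivity)

lemma S4_nonneg (h0 : 0 ≤ r) : 0 ≤ S4 r := by
  apply tsum_nonneg
  intro n
  positivity

/-- the real value of E₄ -/
def E4r (r : ℝ) : ℝ := 1 + 240 * S4 r

lemma one_le_E4r (h0 : 0 ≤ r) : 1 ≤ E4r r := by
  have := S4_nonneg (r := r) h0
  unfold E4r; linarith

lemma E₄_real : E₄ (r : ℂ) = (E4r r : ℂ) := by
  unfold E₄
  have h : (∑' n : ℕ, (ArithmeticFunction.sigma 3 (n + 1) : ℂ) * (r:ℂ) ^ (n + 1))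
      = ((S4 r : ℝ) : ℂ) := by
    rw [S4, Complex.ofReal_tsum]
    congr 1
    funext n
    push_cast
    ring
  rw [h, E4r]
  push_cast
  ring

/-- the real product -/
def Pr (r : ℝ) : ℝ := Real.exp (24 * Lsum r)

lemma Δ_real (h0 : 0 ≤ r) (h1 : r < 1) : Δ (r : ℂ) = ((r * Pr r : ℝ) : ℂ) := by
  unfold Δ Pr
  have h := (hasProd_pow24 h0 h1).map (Complex.ofRealHom) Complex.continuous_ofReal
  have h2 : HasProd (fun n : ℕ => (1 - (r:ℂ) ^ (n + 1)) ^ 24)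
      ((Real.exp (24 * Lsum r) : ℝ) : ℂ) := by
    convert h using 2 with n
    simp only [Function.comp_apply, map_pow, map_sub, map_one, Complex.ofRealHom_eq_coe,
      Complex.ofReal_pow]
    rfl
  rw [h2.tprod_eq]
  push_cast
  ring

/-- the real value of J -/
def Jr (r : ℝ) : ℝ := E4r r ^ 3 / (r * Pr r)

lemma J_real (h0 : 0 < r) (h1 : r < 1) :
    J (r : ℂ) = ((Jr r : ℝ) : ℂ) := by
  rw [J, Δ_real h0.le h1, E₄_real, Jr]
  push_cast
  ring




variable {r : ℝ}

lemma Pr_pos : 0 < Pr r := Real.exp_pos _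

lemma Jr_ge_exp (h0 : 0 < r) (h1 : r < 1) :
    Real.exp (-(24 * Lsum r)) ≤ Jr r := by
  have hP : 0 < Pr r := Pr_pos
  have hrP : 0 < r * Pr r := by positivity
  have h2 : 1 / Pr r ≤ E4r r ^ 3 / (r * Pr r) := by
    have hE : (1:ℝ) ≤ E4r r ^ 3 := one_le_pow₀ (one_le_E4r h0.le)
    have hle : r * Pr r ≤ Pr r := by nlinarith
    calc 1 / Pr r ≤ 1 / (r * Pr r) := one_div_le_one_div_of_le hrP hle
      _ ≤ E4r r ^ 3 / (r * Pr r) := by gcongr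
  have h3 : Real.exp (-(24 * Lsum r)) = 1 / Pr r := by
    rw [Real.exp_neg, Pr, one_div]
  rw [h3]; exact h2

lemma one_le_Jr (h0 : 0 < r) (h1 : r < 1) : 1 ≤ Jr r := by
  have h := Jr_ge_exp h0 h1
  have h2 : (0:ℝ) ≤ -(24 * Lsum r) := by
    have := Lsum_nonpos h0.le h1; linarith
  calc (1:ℝ) ≤ Real.exp (-(24 * Lsum r)) := Real.one_le_exp h2
    _ ≤ Jr r := h

lemma Jr_ge (h0 : 0 < r) (h1 : r < 1) (N : ℕ) :
    Real.exp (-(24 * (N * Real.log (1 - r ^ N)))) ≤ Jr r := by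
  refine le_trans ?_ (Jr_ge_exp h0 h1)
  apply Real.exp_le_exp.2
  have := Lsum_le h0.le h1 N
  nlinarith [this]

/-- the special radius -/
def rN (N : ℕ) : ℝ := Real.exp (-(Real.log 2 / N))

lemma rN_pos (N : ℕ) : 0 < rN N := Real.exp_pos _

lemma rN_lt_one {N : ℕ} (hN : 1 ≤ N) : rN N < 1 := by
  apply Real.exp_lt_one_iff.2
  have h2 : 0 < Real.log 2 := Real.log_pos (by norm_num)
  have hN' : (0:ℝ) < N := by exact_mod_cast hN
  have : 0 < Real.log 2 / N := by positivity
  linarith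

lemma rN_pow (N : ℕ) (hN : 1 ≤ N) : rN N ^ N = 1 / 2 := by
  rw [rN, ← Real.exp_nat_mul]
  have hN' : (N:ℝ) ≠ 0 := by
    have : (0:ℝ) < N := by exact_mod_cast hN
    linarith
  rw [show (N:ℝ) * -(Real.log 2 / N) = -Real.log 2 by field_simp]
  rw [Real.exp_neg, Real.exp_log (by norm_num : (0:ℝ) < 2)]
  norm_num

lemma one_sub_rN {N : ℕ} (hN : 1 ≤ N) : 1 / (4 * N) ≤ 1 - rN N := by
  set x := Real.log 2 / N with hx
  have hl2 : 0.6931471803 < Real.log 2 := Real.log_two_gt_d9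
  have hl2' : Real.log 2 < 0.6931471808 := Real.log_two_lt_d9
  have hN' : (1:ℝ) ≤ N := by exact_mod_cast hN
  have hx0 : 0 < x := by positivity
  have hx1 : x ≤ 1 := by
    rw [hx, div_le_one (by linarith)]
    linarith
  have hexp : rN N ≤ 1 / (1 + x) := by
    rw [rN, ← hx]
    have h1x : (0:ℝ) < 1 + x := by linarith
    rw [Real.exp_neg]
    rw [inv_eq_one_div]
    apply div_le_div_of_nonneg_left (by norm_num) h1x
    linarith [Real.add_one_le_exp x]
  have key : 1 - 1 / (1 + x) = x / (1 + x) := by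
    field_simp
    ring
  have h2 : x / 2 ≤ x / (1 + x) := by
    apply div_le_div_of_nonneg_left hx0.le (by linarith) (by linarith)
  have h3 : 1 / (4 * (N:ℝ)) ≤ x / 2 := by
    rw [hx, div_div]
    rw [div_le_div_iff₀ (by linarith) (by positivity)]
    nlinarith
  have h4 : x / (1+x) ≤ 1 - rN N := by
    rw [← key]
    linarith [hexp]
  linarith


lemma Jr_rN {N : ℕ} (hN : 1 ≤ N) : (2:ℝ) ^ (24 * N) ≤ Jr (rN N) := by
  have h := Jr_ge (rN_pos N) (rN_lt_one hN) N
  rw [rN_pow N hN] at h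
  have h2 : (1:ℝ) - 1/2 = 1/2 := by norm_num
  rw [h2] at h
  have h3 : Real.log (1/2) = -Real.log 2 := by
    rw [one_div, Real.log_inv]
  rw [h3] at h
  have h4 : -(24 * ((N:ℝ) * -Real.log 2)) = ((24 * N : ℕ) : ℝ) * Real.log 2 := by
    push_cast; ring
  rw [h4, Real.exp_nat_mul, Real.exp_log (by norm_num : (0:ℝ) < 2)] at h
  exact h

lemma exists_bigN (C : ℝ) (m N₀ : ℕ) :
    ∃ N : ℕ, N₀ ≤ N ∧ 1 ≤ N ∧ C * (4 * (N:ℝ)) ^ m < 2 ^ (24 * N) := by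
  have hbase : (1:ℝ) < 2 ^ 24 := by norm_num
  have htend := tendsto_pow_const_div_const_pow_of_one_lt m hbase
  set D : ℝ := |C| * 4 ^ m + 1 with hD
  have hD0 : 0 < D := by positivity
  have hev := htend.eventually (eventually_lt_nhds (show (0:ℝ) < 1/D by positivity))
  obtain ⟨N, hN1, hN2⟩ := (hev.and (Filter.eventually_ge_atTop (max N₀ 1))).exists
  refine ⟨N, le_trans (le_max_left _ _) hN2, le_trans (le_max_right _ _) hN2, ?_⟩
  have hNR : (1:ℝ) ≤ (N:ℝ) := by exact_mod_cast le_trans (le_max_right _ _) hN2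
  have hNm : (1:ℝ) ≤ (N:ℝ) ^ m := one_le_pow₀ hNR
  have hpow : (0:ℝ) < ((2:ℝ) ^ 24) ^ N := by positivity
  rw [div_lt_iff₀ hpow] at hN1
  have h5 : D * (N:ℝ) ^ m < ((2:ℝ) ^ 24) ^ N := by
    calc D * (N:ℝ) ^ m = (N:ℝ) ^ m * D := by ring
      _ < 1 / D * ((2:ℝ)^24) ^ N * D := by
          apply mul_lt_mul_of_pos_right hN1 hD0
      _ = ((2:ℝ)^24) ^ N := by field_simp
  have h6 : C * (4 * (N:ℝ)) ^ m ≤ (D - 1) * (N:ℝ) ^ m := by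
    have : C * (4 * (N:ℝ)) ^ m ≤ |C| * (4 * (N:ℝ)) ^ m := by
      apply mul_le_mul_of_nonneg_right (le_abs_self C) (by positivity)
    calc C * (4 * (N:ℝ)) ^ m ≤ |C| * (4 * (N:ℝ)) ^ m := this
      _ = (D - 1) * (N:ℝ) ^ m := by rw [hD]; rw [mul_pow]; ring
  have h7 : (D - 1) * (N:ℝ) ^ m < D * (N:ℝ) ^ m := by nlinarith
  have h8 : ((2:ℝ) ^ 24) ^ N = 2 ^ (24 * N) := by rw [← pow_mul]
  linarith [h8 ▸ h5]




/-- coefficient bound for polynomial evaluation on [0,1] -/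
lemma eval_abs_le (c : Polynomial ℝ) {r : ℝ} (h0 : 0 ≤ r) (h1 : r ≤ 1) :
    |c.eval r| ≤ ∑ j ∈ range (c.natDegree + 1), |c.coeff j| := by
  rw [Polynomial.eval_eq_sum_range]
  refine (Finset.abs_sum_le_sum_abs _ _).trans ?_
  apply Finset.sum_le_sum
  intro j _
  rw [abs_mul]
  have : |r ^ j| ≤ 1 := by
    rw [_root_.abs_pow, _root_.abs_of_nonneg h0]
    exact pow_le_one₀ h0 h1
  nlinarith [abs_nonneg (c.coeff j), abs_nonneg (r ^ j)]

/-- lower bound for a nonzero polynomial near 1 -/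
lemma exists_lower (c : Polynomial ℝ) (hc : c ≠ 0) :
    ∃ (m : ℕ) (ε δ : ℝ), 0 < ε ∧ 0 < δ ∧
      ∀ r : ℝ, 1 - δ < r → r < 1 → ε * (1 - r) ^ m ≤ |c.eval r| := by
  obtain ⟨h, hfac, hndvd⟩ := c.exists_eq_pow_rootMultiplicity_mul_and_not_dvd hc 1
  set m := c.rootMultiplicity 1 with hm
  have hh1 : h.eval 1 ≠ 0 := by
    intro habs
    exact hndvd ((Polynomial.dvd_iff_isRoot).2 habs)
  set ε := |h.eval 1| / 2 with hε
  have hε0 : 0 < ε := by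
    have := abs_pos.2 hh1
    rw [hε]; linarith
  have hcont : ContinuousAt (fun x : ℝ => h.eval x) 1 := (Polynomial.continuous h).continuousAt
  rw [Metric.continuousAt_iff] at hcont
  obtain ⟨δ, hδ0, hδ⟩ := hcont ε hε0
  refine ⟨m, ε, δ, hε0, hδ0, fun r hr1 hr2 => ?_⟩
  have hdist : dist r 1 < δ := by
    rw [Real.dist_eq, _root_.abs_of_nonpos (by linarith)]
    linarith
  have hball := hδ hdist
  rw [Real.dist_eq] at hball
  have hlow : ε ≤ |h.eval r| := by
    have := abs_sub_abs_le_abs_sub (h.eval 1) (h.eval r)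
    rw [abs_sub_comm (h.eval 1)] at this
    rw [hε]
    have h2 : |h.eval r - h.eval 1| < |h.eval 1| / 2 := by
      rw [hε] at hball; exact hball
    linarith [abs_sub_abs_le_abs_sub (h.eval r) (h.eval 1), abs_sub_comm (h.eval r) (h.eval 1)]
  have heval : c.eval r = (r - 1) ^ m * h.eval r := by
    conv_lhs => rw [hfac]
    simp [Polynomial.eval_mul, Polynomial.eval_pow]
  rw [heval, abs_mul, _root_.abs_pow]
  have habs1 : |r - 1| = 1 - r := by
    rw [_root_.abs_of_nonpos (by linarith)]; ring
  rw [habs1]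
  have h1r : 0 ≤ (1 - r) ^ m := pow_nonneg (by linarith) m
  calc ε * (1 - r) ^ m = (1 - r) ^ m * ε := mul_comm _ _
    _ ≤ (1 - r) ^ m * |h.eval r| := mul_le_mul_of_nonneg_left hlow h1r

/-- main contradiction -/
theorem key (R : Polynomial (Polynomial ℚ)) (hR : R ≠ 0)
    (hvanish : ∀ r : ℝ, 0 < r → r < 1 →
      ∑ k ∈ range (R.natDegree + 1),
        ((R.coeff k).map (algebraMap ℚ ℝ)).eval r * Jr r ^ k = 0) : False := by
  set n := R.natDegree with hn
  set cR : ℕ → Polynomial ℝ := fun k => (R.coeff k).map (algebraMap ℚ ℝ) with hcR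
  have hcn : cR n ≠ 0 := by
    intro habs
    have : R.coeff n ≠ 0 := by
      rw [hn]
      exact Polynomial.leadingCoeff_ne_zero.2 hR
    exact this (Polynomial.map_eq_zero_iff (algebraMap ℚ ℝ).injective |>.1 habs)
  obtain ⟨m, ε, δ, hε0, hδ0, hlower⟩ := exists_lower (cR n) hcn
  set M : ℝ := ∑ k ∈ range (n + 1), ∑ j ∈ range ((cR k).natDegree + 1), |(cR k).coeff j| with hM
  have hM0 : 0 ≤ M := by
    apply Finset.sum_nonneg; intro k _
    apply Finset.sum_nonneg; intro j _
    exact abs_nonneg _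
  have hMk : ∀ k ∈ range (n + 1), ∀ r : ℝ, 0 ≤ r → r ≤ 1 → |(cR k).eval r| ≤ M := by
    intro k hk r h0 h1
    refine (eval_abs_le (cR k) h0 h1).trans ?_
    apply Finset.single_le_sum (f := fun k => ∑ j ∈ range ((cR k).natDegree + 1), |(cR k).coeff j|)
      (fun i _ => Finset.sum_nonneg fun j _ => abs_nonneg _) hk
  -- choose N₀ so that rN N > 1 - δ for N ≥ N₀
  have hlog2 : 0 < Real.log 2 := Real.log_pos (by norm_num)
  set N₀ : ℕ := ⌈Real.log 2 / δ⌉₊ + 1 with hN₀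
  have hrN_close : ∀ N : ℕ, N₀ ≤ N → 1 - δ < rN N := by
    intro N hN
    have hN1 : (1:ℝ) ≤ N := by
      have : 1 ≤ N := le_trans (by omega) hN
      exact_mod_cast this
    have hceil : Real.log 2 / δ < N₀ := by
      rw [hN₀]
      push_cast
      linarith [Nat.le_ceil (Real.log 2 / δ)]
    have hNN : Real.log 2 / δ < N := lt_of_lt_of_le hceil (by exact_mod_cast hN)
    have hx : Real.log 2 / N < δ := by
      rw [div_lt_iff₀ (by linarith)]
      rw [div_lt_iff₀ hδ0] at hNN
      nlinarith
    have := Real.add_one_le_exp (-(Real.log 2 / N))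
    rw [rN]
    linarith
  -- get N
  obtain ⟨N, hNN₀, hN1, hNbig⟩ := exists_bigN (((n:ℝ) * M) / ε) m N₀
  set r := rN N with hr
  have h0r : 0 < r := rN_pos N
  have h1r : r < 1 := rN_lt_one hN1
  have hclose : 1 - δ < r := hrN_close N hNN₀
  set y := Jr r with hy
  have hy1 : 1 ≤ y := one_le_Jr h0r h1r
  have hy0 : 0 < y := by linarith
  have hvan := hvanish r h0r h1r
  rw [Finset.sum_range_succ] at hvan
  have hlow := hlower r hclose h1r
  by_cases hn0 : n = 0
  · -- constant case
    rw [hn0] at hvan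
    simp only [range_zero, Finset.sum_empty, pow_zero, mul_one, zero_add] at hvan
    rw [hn0] at hlow
    rw [hvan] at hlow
    simp only [abs_zero] at hlow
    have h1r' : (0:ℝ) < 1 - r := by linarith
    have : (0:ℝ) < ε * (1 - r) ^ m := by positivity
    linarith
  · have hn1 : 1 ≤ n := Nat.one_le_iff_ne_zero.2 hn0
    have htop : |(cR n).eval r| * y ^ n ≤ (n:ℝ) * M * y ^ (n - 1) := by
      have heq : (cR n).eval r * y ^ n = -∑ k ∈ range n, (cR k).eval r * y ^ k := by
        linarith [hvan]
      have habs : |(cR n).eval r * y ^ n| ≤ ∑ k ∈ range n, |(cR k).eval r * y ^ k| := by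
        rw [heq, abs_neg]
        exact Finset.abs_sum_le_sum_abs _ _
      rw [abs_mul, _root_.abs_pow, _root_.abs_of_pos hy0] at habs
      refine habs.trans ?_
      have hbound : ∀ k ∈ range n, |(cR k).eval r * y ^ k| ≤ M * y ^ (n - 1) := by
        intro k hk
        rw [mem_range] at hk
        rw [abs_mul, _root_.abs_pow, _root_.abs_of_pos hy0]
        have h1 : |(cR k).eval r| ≤ M := hMk k (by rw [mem_range]; omega) r h0r.le h1r.le
        have h2 : y ^ k ≤ y ^ (n - 1) := pow_le_pow_right₀ hy1 (by omega)
        have hyk : (0:ℝ) ≤ y ^ k := by positivity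
        nlinarith
      calc ∑ k ∈ range n, |(cR k).eval r * y ^ k| ≤ ∑ _k ∈ range n, M * y ^ (n - 1) :=
            Finset.sum_le_sum hbound
        _ = (n:ℝ) * (M * y ^ (n - 1)) := by rw [Finset.sum_const, card_range, nsmul_eq_mul]
        _ = (n:ℝ) * M * y ^ (n - 1) := by ring
    -- ε (1-r)^m y^n ≤ n M y^{n-1}
    have h1 : ε * (1 - r) ^ m * y ^ n ≤ (n:ℝ) * M * y ^ (n - 1) := by
      refine le_trans ?_ htop
      exact mul_le_mul_of_nonneg_right hlow (pow_nonneg hy0.le n)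
    have hyn : y ^ n = y ^ (n - 1) * y := by
      rw [← pow_succ]
      congr 1
      omega
    rw [hyn] at h1
    have hyn1 : (0:ℝ) < y ^ (n - 1) := by positivity
    have h2 : ε * (1 - r) ^ m * y ≤ (n:ℝ) * M := by
      rw [show ε * (1 - r) ^ m * (y ^ (n-1) * y) = (ε * (1 - r) ^ m * y) * y ^ (n-1) by ring] at h1
      rw [show (n:ℝ) * M * y ^ (n-1) = ((n:ℝ) * M) * y ^ (n-1) by ring] at h1
      exact le_of_mul_le_mul_right h1 hyn1
    have hsub : 1 / (4 * (N:ℝ)) ≤ 1 - r := one_sub_rN hN1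
    have h1r' : (0:ℝ) < 1 - r := by linarith
    have hNpos : (0:ℝ) < 4 * N := by
      have : (1:ℝ) ≤ N := by exact_mod_cast hN1
      linarith
    have h3 : ε * (1 / (4 * (N:ℝ))) ^ m * (2:ℝ) ^ (24 * N) ≤ ε * (1 - r) ^ m * y := by
      have ha : (1 / (4 * (N:ℝ))) ^ m ≤ (1 - r) ^ m :=
        pow_le_pow_left₀ (by positivity) hsub m
      have hb : (2:ℝ) ^ (24 * N) ≤ y := Jr_rN hN1
      have hd : (0:ℝ) < (2:ℝ) ^ (24 * N) := by positivity
      have hab : (1 / (4 * (N:ℝ))) ^ m * (2:ℝ) ^ (24 * N) ≤ (1 - r) ^ m * y :=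
        mul_le_mul ha hb hd.le (pow_nonneg h1r'.le m)
      calc ε * (1 / (4 * (N:ℝ))) ^ m * (2:ℝ) ^ (24 * N)
          = ε * ((1 / (4 * (N:ℝ))) ^ m * (2:ℝ) ^ (24 * N)) := by ring
        _ ≤ ε * ((1 - r) ^ m * y) := mul_le_mul_of_nonneg_left hab hε0.le
        _ = ε * (1 - r) ^ m * y := by ring
    have h4 : ε * (1 / (4 * (N:ℝ))) ^ m * (2:ℝ) ^ (24 * N) ≤ (n:ℝ) * M := by linarith
    have h5 : (2:ℝ) ^ (24 * N) ≤ ((n:ℝ) * M / ε) * (4 * (N:ℝ)) ^ m := by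
      rw [div_mul_eq_mul_div, le_div_iff₀ hε0]
      have hone : (1 / (4 * (N:ℝ))) ^ m = ((4 * (N:ℝ)) ^ m)⁻¹ := by
        rw [one_div, inv_pow]
      rw [hone] at h4
      have h4N : (0:ℝ) < (4 * (N:ℝ)) ^ m := by positivity
      calc (2:ℝ) ^ (24 * N) * ε = (ε * ((4 * (N:ℝ)) ^ m)⁻¹ * (2:ℝ) ^ (24 * N)) * (4 * (N:ℝ)) ^ m := by
            field_simp
        _ ≤ (n:ℝ) * M * (4 * (N:ℝ)) ^ m := by
            apply mul_le_mul_of_nonneg_right h4 h4N.le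
    linarith [hNbig]




-- stand-ins
/-- `MvPolynomial (Fin 1) ℚ ≃ₐ` step as an AlgHom -/
def χ : MvPolynomial (Fin 1) ℚ →ₐ[ℚ] Polynomial ℚ :=
  (Polynomial.mapAlgHom (MvPolynomial.isEmptyAlgEquiv ℚ (Fin 0)).toAlgHom).comp
    (MvPolynomial.finSuccEquiv ℚ 0).toAlgHom

lemma χ_injective : Function.Injective χ := by
  intro a b hab
  simp only [χ, AlgHom.coe_comp, Function.comp_apply, Polynomial.coe_mapAlgHom,
    AlgEquiv.toAlgHom_eq_coe, AlgHom.coe_coe] at hab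
  replace hab := Polynomial.map_injective _
    (fun x y hxy => (MvPolynomial.isEmptyAlgEquiv ℚ (Fin 0)).injective hxy) hab
  exact (MvPolynomial.finSuccEquiv ℚ 0).injective hab

/-- the full iso -/
def Φ : MvPolynomial (Fin 2) ℚ →ₐ[ℚ] Polynomial (Polynomial ℚ) :=
  ((Polynomial.mapAlgHom χ).comp (MvPolynomial.finSuccEquiv ℚ 1).toAlgHom).comp
    (MvPolynomial.rename (Equiv.swap (0 : Fin 2) 1))

lemma Φ_injective : Function.Injective Φ := by
  intro a b hab
  simp only [Φ, AlgHom.coe_comp, Function.comp_apply, Polynomial.coe_mapAlgHom,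
    AlgEquiv.toAlgHom_eq_coe, AlgHom.coe_coe] at hab
  replace hab := Polynomial.map_injective _ (fun x y hxy => χ_injective hxy) hab
  replace hab := (MvPolynomial.finSuccEquiv ℚ 1).injective hab
  exact MvPolynomial.rename_injective _ (Equiv.swap (0 : Fin 2) 1).injective hab

lemma Φ_X0 : Φ (MvPolynomial.X 0) = Polynomial.C Polynomial.X := by
  unfold Φ
  simp only [AlgHom.coe_comp, Function.comp_apply, MvPolynomial.rename_X]
  rw [Equiv.swap_apply_left]
  simp only [AlgEquiv.coe_toAlgHom]
  rw [show (1 : Fin 2) = Fin.succ 0 from rfl, MvPolynomial.finSuccEquiv_X_succ]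
  rw [Polynomial.coe_mapAlgHom, Polynomial.map_C]
  congr 1
  show (Polynomial.mapAlgHom (MvPolynomial.isEmptyAlgEquiv ℚ (Fin 0)).toAlgHom)
      ((MvPolynomial.finSuccEquiv ℚ 0) (MvPolynomial.X 0)) = Polynomial.X
  rw [MvPolynomial.finSuccEquiv_X_zero, Polynomial.coe_mapAlgHom, Polynomial.map_X]

lemma Φ_X1 : Φ (MvPolynomial.X 1) = Polynomial.X := by
  unfold Φ
  simp only [AlgHom.coe_comp, Function.comp_apply, MvPolynomial.rename_X]
  simp only [AlgEquiv.coe_toAlgHom]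
  rw [Equiv.swap_apply_right, MvPolynomial.finSuccEquiv_X_zero, Polynomial.coe_mapAlgHom,
    Polynomial.map_X]

/-- evaluation hom -/
def EV (x y : ℂ) : Polynomial (Polynomial ℚ) →ₐ[ℚ] ℂ :=
  Polynomial.aevalTower (Polynomial.aeval x) y

lemma EV_Φ (x y : ℂ) (p : MvPolynomial (Fin 2) ℚ) :
    EV x y (Φ p) = MvPolynomial.aeval ![x, y] p := by
  have : (EV x y).comp Φ = MvPolynomial.aeval ![x, y] := by
    apply MvPolynomial.algHom_ext
    intro i
    refine Fin.cases ?_ (fun j => ?_) i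
    · simp only [AlgHom.coe_comp, Function.comp_apply, MvPolynomial.aeval_X]
      rw [Φ_X0]
      simp [EV]
    · rw [Subsingleton.elim j 0]
      simp only [AlgHom.coe_comp, Function.comp_apply, MvPolynomial.aeval_X]
      rw [show Fin.succ (0 : Fin 1) = (1 : Fin 2) from rfl, Φ_X1]
      simp [EV]
  calc EV x y (Φ p) = ((EV x y).comp Φ) p := rfl
    _ = _ := by rw [this]

lemma aeval_pi {v : Fin 2 → (UpperHalfPlane → ℂ)} (p : MvPolynomial (Fin 2) ℚ)
    (τ : UpperHalfPlane) :
    (MvPolynomial.aeval v p) τ = MvPolynomial.aeval (fun i => v i τ) p := by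
  have : (Pi.evalAlgHom ℚ (fun _ : UpperHalfPlane => ℂ) τ).comp (MvPolynomial.aeval v)
      = MvPolynomial.aeval (fun i => v i τ) := by
    apply MvPolynomial.algHom_ext
    intro i
    simp
  calc (MvPolynomial.aeval v p) τ
      = ((Pi.evalAlgHom ℚ (fun _ : UpperHalfPlane => ℂ) τ).comp (MvPolynomial.aeval v)) p := rfl
    _ = _ := by rw [this]

lemma aeval_ofReal (c : Polynomial ℚ) (r : ℝ) :
    Polynomial.aeval ((r : ℂ)) c = (((c.map (algebraMap ℚ ℝ)).eval r : ℝ) : ℂ) := by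
  rw [Polynomial.aeval_def, Polynomial.eval_map]
  have h : (algebraMap ℚ ℂ) = Complex.ofRealHom.comp (algebraMap ℚ ℝ) :=
    Subsingleton.elim _ _
  rw [h, show ((r:ℝ):ℂ) = Complex.ofRealHom r from rfl]
  exact (Polynomial.hom_eval₂ c (algebraMap ℚ ℝ) Complex.ofRealHom r).symm

/-- existence of τ with nome r -/
lemma exists_tau {r : ℝ} (h0 : 0 < r) (h1 : r < 1) :
    ∃ τ : UpperHalfPlane, Complex.exp (2 * Real.pi * Complex.I * (τ : ℂ)) = (r : ℂ) := by
  set t : ℝ := -(Real.log r) / (2 * Real.pi) with ht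
  have hπ : (0:ℝ) < Real.pi := Real.pi_pos
  have hlog : Real.log r < 0 := Real.log_neg h0 h1
  have ht0 : 0 < t := by
    rw [ht]
    apply div_pos (by linarith) (by positivity)
  refine ⟨⟨Complex.I * (t : ℂ), ?_⟩, ?_⟩
  · simp [Complex.mul_im, ht0]
  · show Complex.exp (2 * Real.pi * Complex.I * (Complex.I * (t:ℂ))) = _
    have harg : 2 * (Real.pi:ℂ) * Complex.I * (Complex.I * (t:ℂ)) = ((Real.log r : ℝ) : ℂ) := by
      rw [ht]
      push_cast
      rw [show 2 * (Real.pi:ℂ) * Complex.I * (Complex.I * (-Real.log r / (2 * Real.pi)))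
          = (Complex.I * Complex.I) * (2 * (Real.pi:ℂ)) * (-Real.log r / (2 * Real.pi)) by ring,
        Complex.I_mul_I]
      have : (Real.pi : ℂ) ≠ 0 := by exact_mod_cast hπ.ne'
      field_simp
    rw [harg, ← Complex.ofReal_exp, Real.exp_log h0]


end QJAux
end

/-- The functions `τ ↦ e^{2πiτ}` and `τ ↦ j(τ)` on the upper half-plane `ℍ` are
algebraically independent over `ℚ`. -/
theorem qexp_jInv_algebraicallyIndependent :
    AlgebraicIndependent ℚ
      ![(fun τ : UpperHalfPlane => Complex.exp (2 * Real.pi * Complex.I * (τ : ℂ))),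
        (fun τ : UpperHalfPlane => jInv τ)] := by
  rw [algebraicIndependent_iff]
  intro p hp
  by_contra hp0
  set R := QJAux.Φ p with hR
  have hRne : R ≠ 0 := by
    intro h
    apply hp0
    apply QJAux.Φ_injective
    rw [map_zero, ← h, hR]
  apply QJAux.key R hRne
  intro r h0 h1
  obtain ⟨τ, hτ⟩ := QJAux.exists_tau h0 h1
  have hval : MvPolynomial.aeval
      ![Complex.exp (2 * Real.pi * Complex.I * (τ : ℂ)), jInv τ] p = 0 := by
    have h2 := QJAux.aeval_pi (v := ![(fun τ : UpperHalfPlane => Complex.exp (2 * Real.pi * Complex.I * (τ : ℂ))),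
        (fun τ : UpperHalfPlane => jInv τ)]) p τ
    rw [hp] at h2
    simp only [Pi.zero_apply] at h2
    have h3 : (fun i => ![(fun τ' : UpperHalfPlane => Complex.exp (2 * Real.pi * Complex.I * (τ' : ℂ))),
        (fun τ' : UpperHalfPlane => jInv τ')] i τ)
        = ![Complex.exp (2 * Real.pi * Complex.I * (τ : ℂ)), jInv τ] := by
      funext i
      fin_cases i <;> rfl
    rw [← h3]
    exact h2.symm
  rw [hτ] at hval
  have hjr : jInv τ = ((QJAux.Jr r : ℝ) : ℂ) := by
    rw [jInv, hτ, QJAux.J_real h0 h1]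
  rw [hjr] at hval
  rw [← QJAux.EV_Φ (r : ℂ) ((QJAux.Jr r : ℝ) : ℂ) p, ← hR] at hval
  -- expand QJAux.EV
  have hEV : QJAux.EV (r:ℂ) ((QJAux.Jr r : ℝ) : ℂ) R
      = ∑ k ∈ Finset.range (R.natDegree + 1),
          ((((R.coeff k).map (algebraMap ℚ ℝ)).eval r : ℝ) : ℂ) * ((QJAux.Jr r : ℝ) : ℂ) ^ k := by
    show Polynomial.eval₂ ((Polynomial.aeval ((r:ℂ))).toRingHom) _ R = _
    rw [Polynomial.eval₂_eq_sum_range]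
    congr 1
    funext k
    rw [show (Polynomial.aeval ((r:ℂ))).toRingHom (R.coeff k) = Polynomial.aeval ((r:ℂ)) (R.coeff k) from rfl,
      QJAux.aeval_ofReal]
  rw [hEV] at hval
  have hreal : ((∑ k ∈ Finset.range (R.natDegree + 1),
      ((R.coeff k).map (algebraMap ℚ ℝ)).eval r * QJAux.Jr r ^ k : ℝ) : ℂ) = 0 := by
    rw [← hval]
    push_cast
    rfl
  exact_mod_cast hreal
end

section
/- Let X > Y ≥ 1 be integers and let m_{i,j} ∈ ℤ for 1 ≤ i ≤ Y and 1 ≤ j ≤ X, not all zero, with B := max_{i,j} |m_{i,j}|. Then there exists a nonzero vector (x₁, …, x_X) ∈ ℤ^X satisfying Σ_{j=1}^{X} m_{i,j} x_j = 0 for every 1 ≤ i ≤ Y, and such that |x_j| ≤ (X B)^{Y/(X−Y)} for all j. -/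
/-!
Siegel's lemma: an underdetermined homogeneous integer linear system with `Y`
equations and `X > Y` unknowns, coefficients bounded by `B = max |m_{i,j}|`,
has a nonzero integer solution with `|x_j| ≤ (X B)^{Y/(X-Y)}`.
-/

attribute [local instance] Matrix.seminormedAddCommGroup

lemma siegel_norm_eq {Y X : ℕ} (m : Fin Y → Fin X → ℤ) (hY : 1 ≤ Y) (hX : 1 ≤ X) :
    ‖(Matrix.of m : Matrix (Fin Y) (Fin X) ℤ)‖ =
      ((Finset.univ.sup fun p : Fin Y × Fin X => (m p.1 p.2).natAbs : ℕ) : ℝ) := by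
  have h : (Finset.univ.sup fun i => ‖(Matrix.of m : Matrix (Fin Y) (Fin X) ℤ) i‖₊) =
      ((Finset.univ.sup fun p : Fin Y × Fin X => (m p.1 p.2).natAbs : ℕ) : NNReal) := by
    rw [Finset.comp_sup_eq_sup_comp_of_is_total (Nat.cast : ℕ → NNReal) Nat.mono_cast (by simp)]
    rw [← Finset.univ_product_univ, Finset.sup_product_left]
    simp_rw [Pi.nnnorm_def, Function.comp, NNReal.natCast_natAbs]
    rfl
  rw [Matrix.norm_def, Pi.norm_def, h]
  norm_cast

/-- **Siegel's lemma.** -/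
theorem siegels_lemma (X Y : ℕ) (hY : 1 ≤ Y) (hXY : Y < X)
    (m : Fin Y → Fin X → ℤ) (hm : m ≠ 0) :
    ∃ x : Fin X → ℤ, x ≠ 0 ∧ (∀ i : Fin Y, ∑ j : Fin X, m i j * x j = 0) ∧
      ∀ j : Fin X, (|x j| : ℝ) ≤
        ((X : ℝ) * (Finset.univ.sup fun p : Fin Y × Fin X => (m p.1 p.2).natAbs : ℕ)) ^
          ((Y : ℝ) / ((X : ℝ) - (Y : ℝ))) := by
  have hX : 1 ≤ X := hY.trans hXY.le
  have hA : (Matrix.of m : Matrix (Fin Y) (Fin X) ℤ) ≠ 0 := by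
    exact hm
  obtain ⟨t, ht0, htsol, htle⟩ := Int.Matrix.exists_ne_zero_int_vec_norm_le'
    (Matrix.of m) (by simpa using hXY) (by rw [Fintype.card_fin]; omega) hA
  refine ⟨t, ht0, ?_, ?_⟩
  · intro i
    have := congrFun htsol i
    simpa [Matrix.mulVec, dotProduct] using this
  · intro j
    calc (|t j| : ℝ) ≤ ‖t‖ := by
          rw [← Int.norm_eq_abs]; exact norm_le_pi_norm t j
      _ ≤ _ := by
          rw [← siegel_norm_eq m hY hX]
          simpa using htle
end
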